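/- Let N ≥ 1, m ≥ 1, and p = p_m := m + 2/N. Set η(ξ) := ξ^N [log(e + 1/ξ)]^{N/2} for ξ > 0 and η(0) := 0, and C_η := ∫_0^1 s η(s)^{m−1} ds. Let γ : [0,1] → [0,1] be a C¹ function with γ(0) = 0, γ(1) = 1, γ' > 0, satisfying ∫_0^{γ(ξ)} s η(s)^{m−1} ds = C_η ξ for all ξ ∈ [0,1]. Then there exist positive constants (depending only on N and m) such that for all ξ ∈ [0,1]: (i) γ(ξ) ≍ γ(ξ/2) and η(γ(ξ)) ≍ η(γ(ξ/2)); (ii) η(γ(ξ)) ≥ c ξ^{1/(p−1)} for some c > 0; (iii) ∫_0^ξ η(γ(s))^{−(m−1)} ds ≍ γ(ξ)². Here f(ξ) ≍ g(ξ) means there are constants C', C'' > 0 with C' g(ξ) ≤ f(ξ) ≤ C'' g(ξ) for all ξ in the stated range. -/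

import Mathlib

open Set

noncomputable section

/-- `η(ξ) = ξ^N [log(e+1/ξ)]^{N/2}` (with `η(0) = 0`). -/
def eta (N : ℕ) (ξ : ℝ) : ℝ := ξ ^ (N : ℝ) * Real.log (Real.exp 1 + 1 / ξ) ^ ((N : ℝ) / 2)

/-- The hypotheses on the function `γ` of Section 4: `γ : [0,1] → [0,1]` is `C¹`,
increasing, `γ(0) = 0`, `γ(1) = 1`, and `∫_0^{γ(ξ)} s η(s)^{m-1} ds = C_η ξ` with
`C_η = ∫_0^1 s η(s)^{m-1} ds`. -/
def GammaFun (N : ℕ) (m : ℝ) (γ : ℝ → ℝ) : Prop :=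
  ContDiffOn ℝ 1 γ (Icc 0 1) ∧ γ 0 = 0 ∧ γ 1 = 1 ∧
  (∀ ξ ∈ Icc (0 : ℝ) 1, γ ξ ∈ Icc (0 : ℝ) 1) ∧
  (∀ ξ ∈ Icc (0 : ℝ) 1, 0 < derivWithin γ (Icc 0 1) ξ) ∧
  (∀ ξ ∈ Icc (0 : ℝ) 1,
    ∫ s in (0 : ℝ)..(γ ξ), s * eta N s ^ (m - 1) =
      (∫ s in (0 : ℝ)..1, s * eta N s ^ (m - 1)) * ξ)

namespace St16

open intervalIntegral

def gf (ξ : ℝ) : ℝ := ξ ^ 2 * Real.log (Real.exp 1 + 1 / ξ)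

lemma one_le_log {ξ : ℝ} (hξ : 0 ≤ ξ) : 1 ≤ Real.log (Real.exp 1 + 1 / ξ) := by
  have h1 : (0:ℝ) ≤ 1 / ξ := by positivity
  calc (1:ℝ) = Real.log (Real.exp 1) := (Real.log_exp 1).symm
    _ ≤ _ := Real.log_le_log (Real.exp_pos 1) (by linarith)

lemma log_pos' {ξ : ℝ} (hξ : 0 ≤ ξ) : 0 < Real.log (Real.exp 1 + 1 / ξ) :=
  lt_of_lt_of_le one_pos (one_le_log hξ)

lemma gf_nonneg {ξ : ℝ} (hξ : 0 ≤ ξ) : 0 ≤ gf ξ :=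
  mul_nonneg (sq_nonneg ξ) (log_pos' hξ).le

lemma sq_rpow_half {x : ℝ} (hx : 0 ≤ x) (N : ℕ) : (x ^ 2) ^ ((N : ℝ) / 2) = x ^ (N : ℝ) := by
  rw [← Real.rpow_natCast x 2, ← Real.rpow_mul hx]
  congr 1
  push_cast
  ring

lemma eta_eq (N : ℕ) {ξ : ℝ} (hξ : 0 ≤ ξ) : eta N ξ = gf ξ ^ ((N : ℝ) / 2) := by
  unfold eta gf
  rw [Real.mul_rpow (sq_nonneg ξ) (log_pos' hξ).le, sq_rpow_half hξ]

lemma eta_nonneg (N : ℕ) {ξ : ℝ} (hξ : 0 ≤ ξ) : 0 ≤ eta N ξ :=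
  mul_nonneg (Real.rpow_nonneg hξ _) (Real.rpow_nonneg (log_pos' hξ).le _)

lemma eta_pos (N : ℕ) {ξ : ℝ} (hξ : 0 < ξ) : 0 < eta N ξ :=
  mul_pos (Real.rpow_pos_of_pos hξ _) (Real.rpow_pos_of_pos (log_pos' hξ.le) _)

lemma eta_zero (N : ℕ) (hN : 1 ≤ N) : eta N 0 = 0 := by
  unfold eta
  rw [Real.zero_rpow (by exact_mod_cast Nat.one_le_iff_ne_zero.mp hN), zero_mul]

lemma gf_hasDeriv {x : ℝ} (hx : 0 < x) :
    HasDerivAt gf (2 * x * Real.log (Real.exp 1 + 1 / x) + x ^ 2 * (-(x ^ 2)⁻¹ / (Real.exp 1 + 1 / x))) x := by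
  have hne : x ≠ 0 := hx.ne'
  have hpos : (0:ℝ) < Real.exp 1 + 1 / x := by positivity
  have hinv : HasDerivAt (fun y : ℝ => Real.exp 1 + 1 / y) (-(x ^ 2)⁻¹) x := by
    simpa [one_div] using (hasDerivAt_inv hne).const_add (Real.exp 1)
  have hlog : HasDerivAt (fun y : ℝ => Real.log (Real.exp 1 + 1 / y))
      (-(x ^ 2)⁻¹ / (Real.exp 1 + 1 / x)) x := hinv.log hpos.ne'
  have h := (hasDerivAt_pow 2 x).mul hlog
  have hgf : gf = fun y : ℝ => y ^ 2 * Real.log (Real.exp 1 + 1 / y) := rfl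
  rw [hgf]
  refine h.congr_deriv ?_
  push_cast
  ring

lemma gf_deriv_nonneg {x : ℝ} (hx : 0 < x) : 0 ≤ deriv gf x := by
  rw [(gf_hasDeriv hx).deriv]
  have hL := one_le_log hx.le
  have hpos : (0:ℝ) < Real.exp 1 + 1 / x := by positivity
  have h1 : x ^ 2 * (-(x ^ 2)⁻¹ / (Real.exp 1 + 1 / x)) = -(1 / (Real.exp 1 + 1 / x)) := by
    field_simp
  rw [h1]
  have h2 : 1 / (Real.exp 1 + 1 / x) ≤ x := by
    have hxinv : (0:ℝ) < 1 / x := by positivity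
    have : 1 / (Real.exp 1 + 1 / x) ≤ 1 / (1 / x) :=
      one_div_le_one_div_of_le hxinv (le_add_of_nonneg_left (Real.exp_pos 1).le)
    simpa [one_div_one_div] using this
  nlinarith

lemma gf_mono : MonotoneOn gf (Ici 0) := by
  intro a ha b hb hab
  rcases eq_or_lt_of_le (mem_Ici.mp ha) with h0 | h0
  · have : gf 0 = 0 := by simp [gf]
    rw [← h0, this]
    exact gf_nonneg (h0 ▸ hab)
  · have hdiff : ∀ x ∈ Icc a b, HasDerivAt gf _ x := fun x hx => gf_hasDeriv (h0.trans_le hx.1)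
    have hcont : ContinuousOn gf (Icc a b) := fun x hx =>
      ((gf_hasDeriv (h0.trans_le hx.1)).continuousAt).continuousWithinAt
    have := monotoneOn_of_deriv_nonneg (convex_Icc a b) hcont
      (fun x hx => ((gf_hasDeriv (h0.trans_le (interior_subset hx).1)).differentiableAt).differentiableWithinAt)
      (fun x hx => gf_deriv_nonneg (h0.trans_le ((interior_subset hx) : x ∈ Icc a b).1))
    exact this (left_mem_Icc.2 hab) (right_mem_Icc.2 hab) hab

lemma eta_mono (N : ℕ) : MonotoneOn (eta N) (Ici 0) := by
  intro a ha b hb hab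
  rw [eta_eq N ha, eta_eq N hb]
  exact Real.rpow_le_rpow (gf_nonneg ha) (gf_mono ha hb hab) (by positivity)

lemma pow_le_eta (N : ℕ) {ξ : ℝ} (hξ : 0 ≤ ξ) : ξ ^ (N : ℝ) ≤ eta N ξ := by
  unfold eta
  nth_rewrite 1 [← mul_one (ξ ^ (N:ℝ))]
  refine mul_le_mul_of_nonneg_left ?_ (Real.rpow_nonneg hξ _)
  calc (1:ℝ) = 1 ^ ((N:ℝ)/2) := (Real.one_rpow _).symm
    _ ≤ _ := Real.rpow_le_rpow zero_le_one (one_le_log hξ) (by positivity)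

lemma eta_scale (N : ℕ) (hN : 1 ≤ N) {l ξ : ℝ} (hl : 1 ≤ l) (hξ : 0 ≤ ξ) :
    eta N (l * ξ) ≤ l ^ (N : ℝ) * eta N ξ := by
  rcases eq_or_lt_of_le hξ with h0 | h0
  · rw [← h0, mul_zero, eta_zero N hN, mul_zero]
  have hl0 : (0:ℝ) < l := lt_of_lt_of_le one_pos hl
  have hgf : gf (l * ξ) ≤ l ^ 2 * gf ξ := by
    unfold gf
    have hlog : Real.log (Real.exp 1 + 1 / (l * ξ)) ≤ Real.log (Real.exp 1 + 1 / ξ) := by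
      apply Real.log_le_log (by positivity)
      have : 1 / (l * ξ) ≤ 1 / ξ := by
        apply one_div_le_one_div_of_le h0
        nlinarith
      linarith
    calc (l * ξ) ^ 2 * Real.log (Real.exp 1 + 1 / (l * ξ))
        ≤ (l * ξ) ^ 2 * Real.log (Real.exp 1 + 1 / ξ) :=
          mul_le_mul_of_nonneg_left hlog (by positivity)
      _ = l ^ 2 * (ξ ^ 2 * Real.log (Real.exp 1 + 1 / ξ)) := by ring
  rw [eta_eq N (by positivity), eta_eq N hξ]
  calc gf (l * ξ) ^ ((N:ℝ)/2) ≤ (l ^ 2 * gf ξ) ^ ((N:ℝ)/2) :=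
        Real.rpow_le_rpow (gf_nonneg (by positivity)) hgf (by positivity)
    _ = l ^ (N:ℝ) * gf ξ ^ ((N:ℝ)/2) := by
        rw [Real.mul_rpow (by positivity) (gf_nonneg hξ), sq_rpow_half hl0.le]

lemma eta_half (N : ℕ) (hN : 1 ≤ N) {ξ : ℝ} (hξ : 0 ≤ ξ) :
    eta N ξ ≤ 2 ^ (N : ℝ) * eta N (ξ / 2) := by
  have := eta_scale N hN (l := 2) (ξ := ξ / 2) one_le_two (by linarith)
  simpa [mul_div_cancel₀] using this


section Fint

variable {N : ℕ} {m : ℝ}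

lemma fe_mono (hm : 1 ≤ m) : MonotoneOn (fun s => s * eta N s ^ (m-1)) (Ici 0) := by
  intro a ha b hb hab
  have h1 : eta N a ^ (m-1) ≤ eta N b ^ (m-1) :=
    Real.rpow_le_rpow (eta_nonneg N ha) (eta_mono N ha hb hab) (by linarith)
  exact mul_le_mul hab h1 (Real.rpow_nonneg (eta_nonneg N ha) _) hb

lemma fe_nonneg {s : ℝ} (hs : 0 ≤ s) : 0 ≤ s * eta N s ^ (m-1) :=
  mul_nonneg hs (Real.rpow_nonneg (eta_nonneg N hs) _)

lemma fe_int (hm : 1 ≤ m) {a b : ℝ} (ha : 0 ≤ a) (hab : a ≤ b) :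
    IntervalIntegrable (fun s => s * eta N s ^ (m-1)) MeasureTheory.volume a b := by
  apply MonotoneOn.intervalIntegrable
  apply (fe_mono hm).mono
  rw [uIcc_of_le hab]
  exact fun x hx => mem_Ici.2 (ha.trans hx.1)

lemma F_le (hm : 1 ≤ m) {u : ℝ} (hu : 0 ≤ u) :
    (∫ s in (0:ℝ)..u, s * eta N s ^ (m-1)) ≤ u^2/2 * eta N u ^ (m-1) := by
  have hptw : ∀ s ∈ Icc (0:ℝ) u, s * eta N s ^ (m-1) ≤ s * eta N u ^ (m-1) := by
    intro s hs
    exact mul_le_mul_of_nonneg_left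
      (Real.rpow_le_rpow (eta_nonneg N hs.1) (eta_mono N hs.1 hu hs.2) (by linarith)) hs.1
  calc (∫ s in (0:ℝ)..u, s * eta N s ^ (m-1))
      ≤ ∫ s in (0:ℝ)..u, s * eta N u ^ (m-1) :=
        intervalIntegral.integral_mono_on hu (fe_int hm le_rfl hu)
          ((continuous_id.mul continuous_const).intervalIntegrable 0 u) hptw
    _ = u^2/2 * eta N u ^ (m-1) := by
        rw [integral_mul_const, integral_id]
        ring

lemma F_ge (hN : 1 ≤ N) (hm : 1 ≤ m) {u : ℝ} (hu : 0 ≤ u) :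
    3/8 * u^2 * eta N u ^ (m-1) ≤
      ((2:ℝ) ^ (N:ℝ)) ^ (m-1) * ∫ s in (0:ℝ)..u, s * eta N s ^ (m-1) := by
  set K1 := ((2:ℝ)^(N:ℝ))^(m-1) with hK1
  have hK1pos : 0 < K1 := Real.rpow_pos_of_pos (Real.rpow_pos_of_pos two_pos _) _
  have hu2 : (0:ℝ) ≤ u/2 := by linarith
  have hu2u : u/2 ≤ u := by linarith
  have hsplit := (intervalIntegral.integral_add_adjacent_intervals
    (fe_int (N := N) hm le_rfl hu2) (fe_int (N := N) hm hu2 hu2u))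
  have h0 : 0 ≤ ∫ s in (0:ℝ)..(u/2), s * eta N s ^ (m-1) :=
    intervalIntegral.integral_nonneg hu2 (fun s hs => fe_nonneg hs.1)
  have hptw : ∀ s ∈ Icc (u/2) u, s * eta N (u/2) ^ (m-1) ≤ s * eta N s ^ (m-1) := by
    intro s hs
    have hs0 : 0 ≤ s := hu2.trans hs.1
    exact mul_le_mul_of_nonneg_left
      (Real.rpow_le_rpow (eta_nonneg N hu2) (eta_mono N hu2 hs0 hs.1) (by linarith)) hs0
  have h1 : (∫ s in (u/2)..u, s * eta N (u/2) ^ (m-1)) ≤ ∫ s in (u/2)..u, s * eta N s ^ (m-1) :=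
    intervalIntegral.integral_mono_on hu2u
      ((continuous_id.mul continuous_const).intervalIntegrable _ _)
      (fe_int hm hu2 hu2u) hptw
  have h2 : (∫ s in (u/2)..u, s * eta N (u/2) ^ (m-1)) = 3/8*u^2 * eta N (u/2)^(m-1) := by
    rw [integral_mul_const, integral_id]
    ring
  have h3 : eta N u ^ (m-1) ≤ K1 * eta N (u/2) ^ (m-1) := by
    calc eta N u ^ (m-1) ≤ ((2:ℝ)^(N:ℝ) * eta N (u/2)) ^ (m-1) :=
          Real.rpow_le_rpow (eta_nonneg N hu) (eta_half N hN hu) (by linarith)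
      _ = K1 * eta N (u/2) ^ (m-1) := Real.mul_rpow (by positivity) (eta_nonneg N hu2)
  calc 3/8 * u^2 * eta N u ^ (m-1)
      ≤ 3/8 * u^2 * (K1 * eta N (u/2) ^ (m-1)) :=
        mul_le_mul_of_nonneg_left h3 (by positivity)
    _ = K1 * (3/8*u^2 * eta N (u/2)^(m-1)) := by ring
    _ = K1 * ∫ s in (u/2)..u, s * eta N (u/2) ^ (m-1) := by rw [h2]
    _ ≤ K1 * ∫ s in (u/2)..u, s * eta N s ^ (m-1) := by
        exact mul_le_mul_of_nonneg_left h1 hK1pos.le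
    _ ≤ K1 * ∫ s in (0:ℝ)..u, s * eta N s ^ (m-1) := by
        apply mul_le_mul_of_nonneg_left _ hK1pos.le
        rw [← hsplit]
        linarith

lemma Ceta_pos (hN : 1 ≤ N) (hm : 1 ≤ m) :
    0 < ∫ s in (0:ℝ)..1, s * eta N s ^ (m-1) := by
  have h := F_ge (N := N) hN hm (u := 1) zero_le_one
  have hη : 0 < eta N 1 ^ (m-1) := Real.rpow_pos_of_pos (eta_pos N one_pos) _
  have hK1pos : 0 < ((2:ℝ)^(N:ℝ))^(m-1) := Real.rpow_pos_of_pos (Real.rpow_pos_of_pos two_pos _) _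
  nlinarith

lemma fe_contAt (hm : 1 ≤ m) {u : ℝ} (hu : 0 < u) :
    ContinuousAt (fun s => s * eta N s ^ (m-1)) u := by
  have h1 : ContinuousAt (fun s : ℝ => s ^ (N:ℝ)) u :=
    Real.continuousAt_rpow_const u _ (Or.inl hu.ne')
  have h2 : ContinuousAt (fun s : ℝ => Real.exp 1 + 1/s) u :=
    continuousAt_const.add (continuousAt_const.div continuousAt_id hu.ne')
  have hpos : (0:ℝ) < Real.exp 1 + 1/u := by positivity
  have h3 : ContinuousAt (fun s : ℝ => Real.log (Real.exp 1 + 1/s) ^ ((N:ℝ)/2)) u :=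
    (h2.log hpos.ne').rpow_const (Or.inr (by positivity))
  have h4 : ContinuousAt (eta N) u := h1.mul h3
  exact continuousAt_id.mul (h4.rpow_const (Or.inr (by linarith)))

lemma fe_contOn (hm : 1 ≤ m) :
    ContinuousOn (fun s => s * eta N s ^ (m-1)) (Ioi 0) :=
  fun u hu => (fe_contAt hm hu).continuousWithinAt

end Fint

end St16

set_option maxHeartbeats 1000000 in
/-- Lemma 4.1: properties of the function `γ` for `p = p_m`. -/
theorem statement16 (N : ℕ) (hN : 1 ≤ N) (m : ℝ) (hm : 1 ≤ m) (p : ℝ)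
    (hp : p = m + 2 / N) :
    ∃ c C : ℝ, 0 < c ∧ 0 < C ∧
      ∀ γ : ℝ → ℝ, GammaFun N m γ →
        ∀ ξ ∈ Icc (0 : ℝ) 1,
          -- (4.3): γ(ξ) ≍ γ(ξ/2) and η(γ(ξ)) ≍ η(γ(ξ/2))
          (c * γ (ξ / 2) ≤ γ ξ ∧ γ ξ ≤ C * γ (ξ / 2)) ∧
          (c * eta N (γ (ξ / 2)) ≤ eta N (γ ξ) ∧ eta N (γ ξ) ≤ C * eta N (γ (ξ / 2))) ∧
          -- (4.4): η(γ(ξ)) ≳ ξ^{1/(p-1)}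
          c * ξ ^ (1 / (p - 1)) ≤ eta N (γ ξ) ∧
          -- (4.5): ∫_0^ξ η(γ(s))^{-(m-1)} ds ≍ γ(ξ)²
          (c * γ ξ ^ 2 ≤ ∫ s in (0 : ℝ)..ξ, eta N (γ s) ^ (-(m - 1)) ∧
            (∫ s in (0 : ℝ)..ξ, eta N (γ s) ^ (-(m - 1))) ≤ C * γ ξ ^ 2) := by

  have hN1 : (1:ℝ) ≤ (N:ℝ) := by exact_mod_cast hN
  have hN0 : (0:ℝ) < (N:ℝ) := by linarith
  have hp1 : 0 < p - 1 := by
    have h2N : (0:ℝ) < 2 / (N:ℝ) := by positivity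
    rw [hp]; linarith
  set K1 : ℝ := ((2:ℝ) ^ (N:ℝ)) ^ (m - 1) with hK1
  have hK1pos : 0 < K1 := Real.rpow_pos_of_pos (Real.rpow_pos_of_pos two_pos _) _
  have hK1ge1 : 1 ≤ K1 := Real.one_le_rpow (Real.one_le_rpow one_le_two (by positivity)) (by linarith)
  set Cη : ℝ := ∫ s in (0:ℝ)..1, s * eta N s ^ (m-1) with hCηdef
  have hCηpos : 0 < Cη := St16.Ceta_pos hN hm
  set Cb : ℝ := Real.sqrt (8 * K1 / 3) with hCbdef
  have hCb1 : (1:ℝ) ≤ Cb := Real.one_le_sqrt.2 (by nlinarith)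
  have hCbpos : 0 < Cb := lt_of_lt_of_le one_pos hCb1
  set c2 : ℝ := (2 * Cη) ^ (1 / (p - 1)) with hc2def
  have hc2pos : 0 < c2 := Real.rpow_pos_of_pos (by linarith) _
  have hCIpos : (0:ℝ) < 1/(2*Cη) := by positivity
  refine ⟨min 1 (min c2 (1/(2*Cη))), max 1 (max Cb (max (Cb ^ (N:ℝ)) (1/(2*Cη)))),
    lt_min one_pos (lt_min hc2pos hCIpos), lt_of_lt_of_le one_pos (le_max_left _ _), ?_⟩
  set c : ℝ := min 1 (min c2 (1/(2*Cη))) with hcdef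
  set C : ℝ := max 1 (max Cb (max (Cb ^ (N:ℝ)) (1/(2*Cη)))) with hCdef
  have hc1 : c ≤ 1 := min_le_left _ _
  have hcc2 : c ≤ c2 := (min_le_right _ _).trans (min_le_left _ _)
  have hcI : c ≤ 1/(2*Cη) := (min_le_right _ _).trans (min_le_right _ _)
  have hCb : Cb ≤ C := le_max_of_le_right (le_max_left _ _)
  have hCbN : Cb ^ (N:ℝ) ≤ C := le_max_of_le_right (le_max_of_le_right (le_max_left _ _))
  have hCI : 1/(2*Cη) ≤ C := le_max_of_le_right (le_max_of_le_right (le_max_right _ _))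
  intro γ hγ ξ hξ
  obtain ⟨hC1, hγ0, hγ1, hrange, hdpos, hint⟩ := hγ
  have hξ0 : 0 ≤ ξ := hξ.1
  have hξ1 : ξ ≤ 1 := hξ.2
  have hξ2mem : ξ/2 ∈ Icc (0:ℝ) 1 := ⟨by linarith, by linarith⟩
  have hγcont : ContinuousOn γ (Icc 0 1) := hC1.continuousOn
  have hγsm : StrictMonoOn γ (Icc 0 1) := by
    apply strictMonoOn_of_deriv_pos (convex_Icc 0 1) hγcont
    intro x hx
    rw [interior_Icc] at hx
    have h := hdpos x (Ioo_subset_Icc_self hx)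
    rwa [derivWithin_of_mem_nhds (Icc_mem_nhds hx.1 hx.2)] at h
  have hγmono : MonotoneOn γ (Icc 0 1) := hγsm.monotoneOn
  have key : ∀ t ∈ Icc (0:ℝ) 1, (∫ s in (0:ℝ)..(γ t), s * eta N s ^ (m-1)) = Cη * t := by
    intro t ht; rw [hint t ht]
  have hγpos : ∀ t ∈ Icc (0:ℝ) 1, 0 < t → 0 < γ t := by
    intro t ht ht0
    have h := hγsm (left_mem_Icc.2 zero_le_one) ht ht0
    rwa [hγ0] at h
  have hbmem := hrange ξ hξ
  have hamem := hrange (ξ/2) hξ2mem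
  have hb0 : 0 ≤ γ ξ := hbmem.1
  have hb1 : γ ξ ≤ 1 := hbmem.2
  have ha0 : 0 ≤ γ (ξ/2) := hamem.1
  have hab : γ (ξ/2) ≤ γ ξ := hγmono hξ2mem hξ (by linarith)
  have hFb : (∫ s in (0:ℝ)..(γ ξ), s * eta N s ^ (m-1)) = Cη * ξ := key ξ hξ
  have hFa : (∫ s in (0:ℝ)..(γ (ξ/2)), s * eta N s ^ (m-1)) = Cη * (ξ/2) := key _ hξ2mem
  rcases eq_or_lt_of_le hξ0 with hξz | hξpos
  · -- ξ = 0
    have hz : ξ = 0 := hξz.symm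
    subst hz
    have h02 : (0:ℝ)/2 = 0 := by norm_num
    rw [h02, hγ0, St16.eta_zero N hN]
    have hrp : (0:ℝ) ^ (1/(p-1)) = 0 := Real.zero_rpow (by positivity : (0:ℝ) < 1/(p-1)).ne'
    rw [hrp, intervalIntegral.integral_same]
    norm_num
  -- main case ξ > 0
  have hbpos : 0 < γ ξ := hγpos ξ hξ hξpos
  have hapos : 0 < γ (ξ/2) := hγpos _ hξ2mem (by linarith)
  have hetabpos : 0 < eta N (γ ξ) := St16.eta_pos N hbpos
  have hetaapos : 0 < eta N (γ (ξ/2)) := St16.eta_pos N hapos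
  have hE : 0 < eta N (γ ξ) ^ (m-1) := Real.rpow_pos_of_pos hetabpos _
  have hFleb : (∫ s in (0:ℝ)..(γ ξ), s * eta N s ^ (m-1)) ≤ (γ ξ)^2/2 * eta N (γ ξ) ^ (m-1) :=
    St16.F_le hm hb0
  have hFlea : (∫ s in (0:ℝ)..(γ (ξ/2)), s * eta N s ^ (m-1)) ≤ (γ (ξ/2))^2/2 * eta N (γ (ξ/2)) ^ (m-1) :=
    St16.F_le hm ha0
  have hFgeb : 3/8 * (γ ξ)^2 * eta N (γ ξ) ^ (m-1) ≤
      K1 * ∫ s in (0:ℝ)..(γ ξ), s * eta N s ^ (m-1) := St16.F_ge hN hm hb0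
  have hηab : eta N (γ (ξ/2)) ^ (m-1) ≤ eta N (γ ξ) ^ (m-1) :=
    Real.rpow_le_rpow (St16.eta_nonneg N ha0) (St16.eta_mono N ha0 hb0 hab) (by linarith)
  -- (i) upper bound on γ ξ
  have hsq : (γ ξ)^2 ≤ 8*K1/3 * (γ (ξ/2))^2 := by
    have h1 : 3/8 * (γ ξ)^2 * eta N (γ ξ) ^ (m-1) ≤ K1 * (Cη * ξ) := by
      rw [← hFb]; exact hFgeb
    have h3 : Cη * (ξ/2) ≤ (γ (ξ/2))^2/2 * eta N (γ (ξ/2)) ^ (m-1) := by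
      rw [← hFa]; exact hFlea
    have h4 : (γ (ξ/2))^2/2 * eta N (γ (ξ/2)) ^ (m-1) ≤ (γ (ξ/2))^2/2 * eta N (γ ξ) ^ (m-1) :=
      mul_le_mul_of_nonneg_left hηab (by positivity)
    have h34 := mul_le_mul_of_nonneg_left (h3.trans h4) hK1pos.le
    have h5 : 3/8 * (γ ξ)^2 * eta N (γ ξ) ^ (m-1) ≤ K1 * (γ (ξ/2))^2 * eta N (γ ξ) ^ (m-1) := by
      linarith
    have h6 : 3/8 * (γ ξ)^2 ≤ K1 * (γ (ξ/2))^2 := le_of_mul_le_mul_right h5 hE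
    linarith
  have hba : γ ξ ≤ Cb * γ (ξ/2) := by
    calc γ ξ = Real.sqrt ((γ ξ)^2) := (Real.sqrt_sq hb0).symm
      _ ≤ Real.sqrt (8*K1/3 * (γ (ξ/2))^2) := Real.sqrt_le_sqrt hsq
      _ = Cb * γ (ξ/2) := by
          rw [Real.sqrt_mul (by linarith : (0:ℝ) ≤ 8*K1/3), Real.sqrt_sq ha0, hCbdef]
  have hηba : eta N (γ ξ) ≤ Cb ^ (N:ℝ) * eta N (γ (ξ/2)) := by
    calc eta N (γ ξ) ≤ eta N (Cb * γ (ξ/2)) :=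
          St16.eta_mono N hb0 (mul_nonneg hCbpos.le ha0) hba
      _ ≤ Cb ^ (N:ℝ) * eta N (γ (ξ/2)) := St16.eta_scale N hN hCb1 ha0
  -- (ii)
  have hii : c2 * ξ ^ (1/(p-1)) ≤ eta N (γ ξ) := by
    have h1 : Cη * ξ ≤ (γ ξ)^2/2 * eta N (γ ξ) ^ (m-1) := by rw [← hFb]; exact hFleb
    have h2 : (γ ξ)^2 ≤ eta N (γ ξ) ^ ((2:ℝ)/(N:ℝ)) := by
      have h3 : (γ ξ) ^ (N:ℝ) ≤ eta N (γ ξ) := St16.pow_le_eta N hb0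
      have h4 := Real.rpow_le_rpow (Real.rpow_nonneg hb0 _) h3 (by positivity : (0:ℝ) ≤ 2/(N:ℝ))
      rwa [← Real.rpow_mul hb0, mul_div_cancel₀ 2 hN0.ne', show ((2:ℝ)) = ((2:ℕ):ℝ) by norm_num,
        Real.rpow_natCast] at h4
    have h5 : 2 * Cη * ξ ≤ eta N (γ ξ) ^ (p-1) := by
      have h6 : eta N (γ ξ) ^ ((2:ℝ)/(N:ℝ)) * eta N (γ ξ) ^ (m-1) = eta N (γ ξ) ^ (p-1) := by
        rw [← Real.rpow_add hetabpos]
        congr 1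
        rw [hp]; ring
      nlinarith
    have h7 := Real.rpow_le_rpow (by positivity) h5 (by positivity : (0:ℝ) ≤ 1/(p-1))
    rwa [Real.mul_rpow (by positivity) hξ0, ← Real.rpow_mul (St16.eta_nonneg N hb0),
      mul_one_div, div_self hp1.ne', Real.rpow_one] at h7
  -- (iii) the exact identity
  have hCη' : Cη ≠ 0 := hCηpos.ne'
  have hIccsub : Icc (0:ℝ) ξ ⊆ Icc (0:ℝ) 1 := Icc_subset_Icc le_rfl hξ1
  set Φ : ℝ → ℝ := fun s => γ s * derivWithin γ (Icc 0 1) s / Cη with hΦdef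
  have hΦcont : ContinuousOn Φ (Icc 0 1) :=
    (hγcont.mul (hC1.continuousOn_derivWithin (uniqueDiffOn_Icc one_pos) le_rfl)).div_const Cη
  have hΦint : IntervalIntegrable Φ MeasureTheory.volume 0 ξ :=
    ContinuousOn.intervalIntegrable (by rw [uIcc_of_le hξ0]; exact hΦcont.mono hIccsub)
  have hderiv : ∀ s ∈ Ioo (0:ℝ) ξ,
      HasDerivAt (fun t => (γ t)^2 / (2*Cη)) (Φ s) s ∧ eta N (γ s) ^ (-(m-1)) = Φ s := by
    intro s hs
    have hs01 : s ∈ Ioo (0:ℝ) 1 := ⟨hs.1, lt_of_lt_of_le hs.2 hξ1⟩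
    have hsIcc : s ∈ Icc (0:ℝ) 1 := Ioo_subset_Icc_self hs01
    have hnhds : Icc (0:ℝ) 1 ∈ nhds s := Icc_mem_nhds hs01.1 hs01.2
    have hγd : HasDerivAt γ (derivWithin γ (Icc 0 1) s) s :=
      (((hC1.differentiableOn one_ne_zero) s hsIcc).hasDerivWithinAt).hasDerivAt hnhds
    have hγspos : 0 < γ s := hγpos s hsIcc hs01.1
    have hγsmem := hrange s hsIcc
    have hFd : HasDerivAt (fun u => ∫ t in (0:ℝ)..u, t * eta N t ^ (m-1))
        (γ s * eta N (γ s) ^ (m-1)) (γ s) := by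
      have hmeas : StronglyMeasurableAtFilter (fun t => t * eta N t ^ (m-1))
          (nhds (γ s)) MeasureTheory.volume :=
        AEStronglyMeasurable.stronglyMeasurableAtFilter_of_mem
          ((St16.fe_contOn hm).aestronglyMeasurable measurableSet_Ioi) (Ioi_mem_nhds hγspos)
      exact intervalIntegral.integral_hasDerivAt_right
        (St16.fe_int hm le_rfl hγsmem.1) hmeas (St16.fe_contAt hm hγspos)
    have hcomp := hFd.comp s hγd
    have hlin : HasDerivAt (fun t => Cη * t) Cη s := by
      simpa using (hasDerivAt_id s).const_mul Cη
    have heq : ((fun u => ∫ t in (0:ℝ)..u, t * eta N t ^ (m-1)) ∘ γ) =ᶠ[nhds s]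
        (fun t => Cη * t) :=
      Filter.eventuallyEq_of_mem hnhds (fun t ht => key t ht)
    have hkey : γ s * eta N (γ s) ^ (m-1) * derivWithin γ (Icc 0 1) s = Cη :=
      hcomp.unique (hlin.congr_of_eventuallyEq heq)
    have hE' : (0:ℝ) < eta N (γ s) ^ (m-1) := Real.rpow_pos_of_pos (St16.eta_pos N hγspos) _
    constructor
    · have h := (hγd.pow 2).div_const (2*Cη)
      refine h.congr_deriv ?_
      simp only [hΦdef]
      push_cast
      ring
    · rw [Real.rpow_neg (St16.eta_nonneg N hγsmem.1)]
      simp only [hΦdef]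
      rw [eq_div_iff hCη']
      rw [← hkey]
      field_simp
  have hInt : (∫ s in (0:ℝ)..ξ, eta N (γ s) ^ (-(m-1))) = (γ ξ)^2 / (2*Cη) := by
    have h1 : (∫ s in (0:ℝ)..ξ, eta N (γ s) ^ (-(m-1))) = ∫ s in (0:ℝ)..ξ, Φ s := by
      apply intervalIntegral.integral_congr_ae
      have hne : ∀ᵐ x : ℝ ∂MeasureTheory.volume, x ≠ ξ := by
        refine MeasureTheory.ae_iff.2 ?_
        simp only [not_not, setOf_eq_eq_singleton]
        exact Real.volume_singleton
      filter_upwards [hne] with x hx hxmem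
      rw [uIoc_of_le hξ0] at hxmem
      exact (hderiv x ⟨hxmem.1, lt_of_le_of_ne hxmem.2 hx⟩).2
    rw [h1]
    have hGcont : ContinuousOn (fun t => (γ t)^2/(2*Cη)) (Icc 0 ξ) :=
      ((hγcont.mono hIccsub).pow 2).div_const _
    have h2 := intervalIntegral.integral_eq_sub_of_hasDerivAt_of_le hξ0 hGcont
      (fun x hx => (hderiv x hx).1) hΦint
    rw [h2, hγ0]
    norm_num
  -- assemble
  refine ⟨⟨?_, ?_⟩, ⟨?_, ?_⟩, ?_, ?_, ?_⟩
  · calc c * γ (ξ/2) ≤ 1 * γ (ξ/2) := mul_le_mul_of_nonneg_right hc1 ha0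
      _ = γ (ξ/2) := one_mul _
      _ ≤ γ ξ := hab
  · calc γ ξ ≤ Cb * γ (ξ/2) := hba
      _ ≤ C * γ (ξ/2) := mul_le_mul_of_nonneg_right hCb ha0
  · calc c * eta N (γ (ξ/2)) ≤ 1 * eta N (γ (ξ/2)) :=
        mul_le_mul_of_nonneg_right hc1 (St16.eta_nonneg N ha0)
      _ = eta N (γ (ξ/2)) := one_mul _
      _ ≤ eta N (γ ξ) := St16.eta_mono N ha0 hb0 hab
  · calc eta N (γ ξ) ≤ Cb ^ (N:ℝ) * eta N (γ (ξ/2)) := hηba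
      _ ≤ C * eta N (γ (ξ/2)) := mul_le_mul_of_nonneg_right hCbN (St16.eta_nonneg N ha0)
  · calc c * ξ ^ (1/(p-1)) ≤ c2 * ξ ^ (1/(p-1)) :=
        mul_le_mul_of_nonneg_right hcc2 (Real.rpow_nonneg hξ0 _)
      _ ≤ eta N (γ ξ) := hii
  · rw [hInt]
    calc c * γ ξ ^ 2 ≤ 1/(2*Cη) * γ ξ ^ 2 := mul_le_mul_of_nonneg_right hcI (by positivity)
      _ = (γ ξ)^2 / (2*Cη) := by ring
  · rw [hInt]
    calc (γ ξ)^2 / (2*Cη) = 1/(2*Cη) * γ ξ ^ 2 := by ring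
      _ ≤ C * γ ξ ^ 2 := mul_le_mul_of_nonneg_right hCI (by positivity)
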